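/- For positive reals u ≠ v: 3(v-u)/(2√(uv) + (u+v)/2) < log v - log u < (v-u)/((uv(u+v)/2)^(1/3)), assuming u < v. -/

import Mathlib

open Real

/-- Generic: if `f 0 = 0` and `f` has positive derivative on `(0,∞)`, then `f > 0` there. -/
lemma aux_pos (f f' : ℝ → ℝ) (hder : ∀ x, HasDerivAt f (f' x) x) (h0 : f 0 = 0)
    (hpos : ∀ x, 0 < x → 0 < f' x) : ∀ x, 0 < x → 0 < f x := by
  have hmono : StrictMonoOn f (Set.Ici 0) := by
    apply strictMonoOn_of_deriv_pos (convex_Ici 0)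
    · exact fun y _ => (hder y).differentiableAt.continuousAt.continuousWithinAt
    · intro y hy
      rw [interior_Ici] at hy
      rw [(hder y).deriv]
      exact hpos y hy
  intro x hx
  have := hmono Set.self_mem_Ici (Set.mem_Ici.2 hx.le) hx
  rwa [h0] at this

lemma lem_x_lt_sinh : ∀ x : ℝ, 0 < x → 0 < Real.sinh x - x := by
  apply aux_pos _ (fun x => Real.cosh x - 1)
  · exact fun x => (Real.hasDerivAt_sinh x).sub (hasDerivAt_id x)
  · simp
  · intro x hx
    have := Real.one_lt_cosh.2 (ne_of_gt hx)
    linarith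

lemma lem_sq_lt_cosh : ∀ x : ℝ, 0 < x → 0 < Real.cosh x - 1 - x^2/2 := by
  apply aux_pos _ (fun x => Real.sinh x - x)
  · intro x
    have h : HasDerivAt (fun x : ℝ => Real.cosh x - 1 - x^2/2) (Real.sinh x - 0 - (2*x^1)/2) x := by
      exact (((Real.hasDerivAt_cosh x).sub (hasDerivAt_const x 1)).sub
        ((hasDerivAt_pow 2 x).div_const 2))
    convert h using 1; push_cast; ring
  · simp
  · exact lem_x_lt_sinh

lemma lem_cube_lt_sinh : ∀ x : ℝ, 0 < x → 0 < Real.sinh x - x - x^3/6 := by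
  apply aux_pos _ (fun x => Real.cosh x - 1 - x^2/2)
  · intro x
    have h : HasDerivAt (fun x : ℝ => Real.sinh x - x - x^3/6) (Real.cosh x - 1 - (3*x^2)/6) x := by
      exact (((Real.hasDerivAt_sinh x).sub (hasDerivAt_id x)).sub
        ((hasDerivAt_pow 3 x).div_const 6))
    convert h using 1; push_cast; ring
  · simp
  · exact lem_sq_lt_cosh

/-- Canonical shape for the functions in the derivative chain. -/
noncomputable def shape (a b c0 c1 c2 c3 d0 d1 d2 d3 : ℝ) : ℝ → ℝ := fun y =>
  a * Real.sinh (3*y) + b * Real.cosh (3*y)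
    + (c0 + c1*y + c2*y^2 + c3*y^3) * Real.sinh y
    + (d0 + d1*y + d2*y^2 + d3*y^3) * Real.cosh y

lemma shape_hasDerivAt (a b c0 c1 c2 c3 d0 d1 d2 d3 x : ℝ) :
    HasDerivAt (shape a b c0 c1 c2 c3 d0 d1 d2 d3)
      (shape (3*b) (3*a) (c1+d0) (2*c2+d1) (3*c3+d2) d3 (d1+c0) (2*d2+c1) (3*d3+c2) c3 x) x := by
  have h3 : HasDerivAt (fun y : ℝ => 3*y) 3 x := by simpa using (hasDerivAt_id x).const_mul 3
  have hs3 : HasDerivAt (fun y : ℝ => Real.sinh (3*y)) (Real.cosh (3*x) * 3) x :=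
    (Real.hasDerivAt_sinh (3*x)).comp x h3
  have hc3 : HasDerivAt (fun y : ℝ => Real.cosh (3*y)) (Real.sinh (3*x) * 3) x :=
    (Real.hasDerivAt_cosh (3*x)).comp x h3
  have hp : HasDerivAt (fun y : ℝ => c0 + c1*y + c2*y^2 + c3*y^3)
      (c1 + c2*(2*x^1) + c3*(3*x^2)) x := by
    have := (((hasDerivAt_const x c0).add ((hasDerivAt_id x).const_mul c1)).add
      ((hasDerivAt_pow 2 x).const_mul c2)).add ((hasDerivAt_pow 3 x).const_mul c3)
    exact this.congr_deriv (by push_cast; ring)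
  have hq : HasDerivAt (fun y : ℝ => d0 + d1*y + d2*y^2 + d3*y^3)
      (d1 + d2*(2*x^1) + d3*(3*x^2)) x := by
    have := (((hasDerivAt_const x d0).add ((hasDerivAt_id x).const_mul d1)).add
      ((hasDerivAt_pow 2 x).const_mul d2)).add ((hasDerivAt_pow 3 x).const_mul d3)
    exact this.congr_deriv (by push_cast; ring)
  have h := (((hs3.const_mul a).add (hc3.const_mul b)).add
      (hp.mul (Real.hasDerivAt_sinh x))).add (hq.mul (Real.hasDerivAt_cosh x))
  exact h.congr_deriv (by simp only [shape]; ring)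

lemma shape_step (a b c0 c1 c2 c3 d0 d1 d2 d3 a' b' c0' c1' c2' c3' d0' d1' d2' d3' : ℝ)
    (ha : a' = 3*b) (hb : b' = 3*a) (hc0 : c0' = c1+d0) (hc1 : c1' = 2*c2+d1)
    (hc2 : c2' = 3*c3+d2) (hc3 : c3' = d3) (hd0 : d0' = d1+c0) (hd1 : d1' = 2*d2+c1)
    (hd2 : d2' = 3*d3+c2) (hd3 : d3' = c3) (h0 : b + d0 = 0)
    (hpos : ∀ x, 0 < x → 0 < shape a' b' c0' c1' c2' c3' d0' d1' d2' d3' x) :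
    ∀ x, 0 < x → 0 < shape a b c0 c1 c2 c3 d0 d1 d2 d3 x := by
  rw [ha, hb, hc0, hc1, hc2, hc3, hd0, hd1, hd2, hd3] at hpos
  apply aux_pos _ _ (shape_hasDerivAt a b c0 c1 c2 c3 d0 d1 d2 d3) _ hpos
  simp [shape]; linarith

lemma F7_pos : ∀ x : ℝ, 0 < x →
    0 < shape 0 (2187/4) 0 (-126) 0 (-1) (-843/4) 0 (-21) 0 x := by
  intro x hx
  have h1 := lem_x_lt_sinh x hx
  have h2 := lem_sq_lt_cosh x hx
  have h3 := lem_cube_lt_sinh x hx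
  have hsp : 0 < Real.sinh x := Real.sinh_pos_iff.2 hx
  have hcp : (1:ℝ) ≤ Real.cosh x := Real.one_le_cosh x
  have hsq : Real.cosh x ^ 2 = Real.sinh x ^ 2 + 1 := Real.cosh_sq x
  have hc3 : Real.cosh (3*x) = 4 * Real.cosh x ^ 3 - 3 * Real.cosh x := Real.cosh_three_mul x
  simp only [shape, hc3]
  nlinarith [mul_lt_mul_of_pos_right (show x^3 < 6*Real.sinh x by linarith) hsp,
    mul_lt_mul_of_pos_right (show x < Real.sinh x by linarith) hsp,
    mul_lt_mul_of_pos_right (show x^2 < 2*Real.cosh x by nlinarith) (by linarith : (0:ℝ) < Real.cosh x),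
    mul_nonneg (sub_nonneg.2 hcp) (show (0:ℝ) ≤ 4*Real.cosh x^2 - 3 by nlinarith),
    sq_nonneg (Real.sinh x), sq_nonneg (Real.cosh x), hsq]

lemma sinh_cube_ineq : ∀ x : ℝ, 0 < x → x^3 * Real.cosh x < Real.sinh x ^ 3 := by
  have h6 := shape_step (729/4) 0 (-483/4) 0 (-18) 0 0 (-90) 0 (-1)
    0 (2187/4) 0 (-126) 0 (-1) (-843/4) 0 (-21) 0
    (by norm_num) (by norm_num) (by norm_num) (by norm_num) (by norm_num) (by norm_num)
    (by norm_num) (by norm_num) (by norm_num) (by norm_num) (by norm_num) F7_pos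
  have h5 := shape_step 0 (243/4) 0 (-60) 0 (-1) (-243/4) 0 (-15) 0
    (729/4) 0 (-483/4) 0 (-18) 0 0 (-90) 0 (-1)
    (by norm_num) (by norm_num) (by norm_num) (by norm_num) (by norm_num) (by norm_num)
    (by norm_num) (by norm_num) (by norm_num) (by norm_num) (by norm_num) h6
  have h4 := shape_step (81/4) 0 (-99/4) 0 (-12) 0 0 (-36) 0 (-1)
    0 (243/4) 0 (-60) 0 (-1) (-243/4) 0 (-15) 0
    (by norm_num) (by norm_num) (by norm_num) (by norm_num) (by norm_num) (by norm_num)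
    (by norm_num) (by norm_num) (by norm_num) (by norm_num) (by norm_num) h5
  have h3 := shape_step 0 (27/4) 0 (-18) 0 (-1) (-27/4) 0 (-9) 0
    (81/4) 0 (-99/4) 0 (-12) 0 0 (-36) 0 (-1)
    (by norm_num) (by norm_num) (by norm_num) (by norm_num) (by norm_num) (by norm_num)
    (by norm_num) (by norm_num) (by norm_num) (by norm_num) (by norm_num) h4
  have h2 := shape_step (9/4) 0 (-3/4) 0 (-6) 0 0 (-6) 0 (-1)
    0 (27/4) 0 (-18) 0 (-1) (-27/4) 0 (-9) 0
    (by norm_num) (by norm_num) (by norm_num) (by norm_num) (by norm_num) (by norm_num)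
    (by norm_num) (by norm_num) (by norm_num) (by norm_num) (by norm_num) h3
  have h1 := shape_step 0 (3/4) 0 0 0 (-1) (-3/4) 0 (-3) 0
    (9/4) 0 (-3/4) 0 (-6) 0 0 (-6) 0 (-1)
    (by norm_num) (by norm_num) (by norm_num) (by norm_num) (by norm_num) (by norm_num)
    (by norm_num) (by norm_num) (by norm_num) (by norm_num) (by norm_num) h2
  have h0 := shape_step (1/4) 0 (-3/4) 0 0 0 0 0 0 (-1)
    0 (3/4) 0 0 0 (-1) (-3/4) 0 (-3) 0
    (by norm_num) (by norm_num) (by norm_num) (by norm_num) (by norm_num) (by norm_num)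
    (by norm_num) (by norm_num) (by norm_num) (by norm_num) (by norm_num) h1
  intro x hx
  have := h0 x hx
  simp only [shape, Real.sinh_three_mul] at this
  nlinarith [this]

lemma logA : ∀ x : ℝ, 0 < x → 3 * Real.sinh x < x * (Real.cosh x + 2) := by
  have hA2 : ∀ x : ℝ, 0 < x → 0 < x * Real.cosh x - Real.sinh x := by
    apply aux_pos _ (fun x => x * Real.sinh x)
    · intro x
      have := ((hasDerivAt_id x).mul (Real.hasDerivAt_cosh x)).sub (Real.hasDerivAt_sinh x)
      exact this.congr_deriv (by simp only [id_eq]; ring)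
    · simp
    · exact fun x hx => mul_pos hx (Real.sinh_pos_iff.2 hx)
  have hA1 : ∀ x : ℝ, 0 < x → 0 < x * Real.sinh x + 2 - 2 * Real.cosh x := by
    apply aux_pos _ (fun x => x * Real.cosh x - Real.sinh x)
    · intro x
      have := (((hasDerivAt_id x).mul (Real.hasDerivAt_sinh x)).add (hasDerivAt_const x 2)).sub
        ((Real.hasDerivAt_cosh x).const_mul 2)
      exact this.congr_deriv (by simp only [id_eq]; ring)
    · simp
    · exact hA2
  have hA0 : ∀ x : ℝ, 0 < x → 0 < x * Real.cosh x + 2*x - 3 * Real.sinh x := by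
    apply aux_pos _ (fun x => x * Real.sinh x + 2 - 2 * Real.cosh x)
    · intro x
      have := (((hasDerivAt_id x).mul (Real.hasDerivAt_cosh x)).add
        ((hasDerivAt_id x).const_mul 2)).sub ((Real.hasDerivAt_sinh x).const_mul 3)
      exact this.congr_deriv (by simp only [id_eq]; ring)
    · simp
    · exact hA1
  intro x hx
  have := hA0 x hx
  linarith

/-- Two-sided bound on the logarithmic mean:
`3(v-u)/(2√(uv) + (u+v)/2) < log v - log u < (v-u)/(uv(u+v)/2)^(1/3)` for `0 < u < v`. -/
theorem stmt_6 (u v : ℝ) (hu : 0 < u) (huv : u < v) :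
    3 * (v - u) / (2 * Real.sqrt (u * v) + (u + v) / 2) < Real.log v - Real.log u ∧
    Real.log v - Real.log u < (v - u) / ((u * v * (u + v) / 2) ^ ((1:ℝ) / 3)) := by
  have hv : 0 < v := hu.trans huv
  set su := Real.sqrt u with hsu
  set sv := Real.sqrt v with hsv
  have hsup : 0 < su := Real.sqrt_pos.2 hu
  have hsvp : 0 < sv := Real.sqrt_pos.2 hv
  have hsuq : su^2 = u := Real.sq_sqrt hu.le
  have hsvq : sv^2 = v := Real.sq_sqrt hv.le
  set x := (Real.log v - Real.log u) / 2 with hxdef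
  have hx : 0 < x := by
    have := Real.log_lt_log hu huv
    simp only [hxdef]; linarith
  have hex : Real.exp x = sv / su := by
    rw [hxdef, show (Real.log v - Real.log u)/2 = Real.log v / 2 - Real.log u / 2 by ring,
      ← Real.log_sqrt hv.le, ← Real.log_sqrt hu.le, Real.exp_sub,
      Real.exp_log hsvp, Real.exp_log hsup]
  have henx : Real.exp (-x) = su / sv := by
    rw [Real.exp_neg, hex]
    field_simp
  have hs : 2 * (su * sv) * Real.sinh x = v - u := by
    rw [Real.sinh_eq, hex, henx]
    field_simp
    linear_combination hsvq - hsuq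
  have hc : 2 * (su * sv) * Real.cosh x = v + u := by
    rw [Real.cosh_eq, hex, henx]
    field_simp
    linear_combination hsvq + hsuq
  have hD2 : (0:ℝ) < 2 * (su * sv) := by positivity
  have hsqrtuv : Real.sqrt (u * v) = su * sv := Real.sqrt_mul hu.le v
  constructor
  · -- lower bound
    have hdenpos : (0:ℝ) < 2 * Real.sqrt (u * v) + (u + v) / 2 := by
      rw [hsqrtuv]; positivity
    rw [div_lt_iff₀ hdenpos]
    have h := logA x hx
    have h' := mul_lt_mul_of_pos_left h hD2
    have e1 : 2 * (su * sv) * (3 * Real.sinh x) = 3 * (v - u) := by linear_combination 3 * hs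
    have e2 : 2 * (su * sv) * (x * (Real.cosh x + 2)) = x * ((v + u) + 4 * (su * sv)) := by
      linear_combination x * hc
    rw [e1, e2] at h'
    have hlv : Real.log v - Real.log u = 2 * x := by rw [hxdef]; ring
    rw [hsqrtuv, hlv]
    nlinarith [h']
  · -- upper bound
    set M := u * v * (u + v) / 2 with hM
    have hMpos : 0 < M := by rw [hM]; positivity
    set D := M ^ ((1:ℝ)/3) with hD
    have hDpos : 0 < D := Real.rpow_pos_of_pos hMpos _
    have hDcube : D ^ (3:ℕ) = M := by
      rw [hD, ← Real.rpow_natCast (M ^ ((1:ℝ)/3)) 3, ← Real.rpow_mul hMpos.le]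
      norm_num
    rw [lt_div_iff₀ hDpos]
    have hlv : Real.log v - Real.log u = 2 * x := by rw [hxdef]; ring
    rw [hlv]
    apply lt_of_pow_lt_pow_left₀ 3 (by linarith)
    have hkey := sinh_cube_ineq x hx
    have h' := mul_lt_mul_of_pos_right hkey (pow_pos hD2 3)
    have e1 : Real.sinh x ^ 3 * (2 * (su * sv)) ^ 3 = (v - u) ^ 3 := by
      rw [← mul_pow]; rw [show Real.sinh x * (2 * (su*sv)) = 2 * (su*sv) * Real.sinh x by ring, hs]
    have e2 : x^3 * Real.cosh x * (2 * (su * sv)) ^ 3 = (2*x*D)^(3:ℕ) := by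
      rw [show ((2*x*D)^(3:ℕ) : ℝ) = 8*x^3*D^(3:ℕ) by ring, hDcube, hM]
      linear_combination (4*x^3*su^2*sv^2)*hc + (4*x^3*(u+v)*su^2)*hsvq
        + (4*x^3*(u+v)*v)*hsuq
    rw [e1, e2] at h'
    exact h'
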